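/- If X is a connected non-bipartite graph and Y is any connected graph, then the categorical product X × Y is connected. -/

import Mathlib

/-- The categorical (tensor) product of simple graphs. -/
def tensorProd {α β : Type*} (G : SimpleGraph α) (H : SimpleGraph β) :
    SimpleGraph (α × β) where
  Adj p q := G.Adj p.1 q.1 ∧ H.Adj p.2 q.2
  symm := ⟨fun _ _ h => ⟨h.1.symm, h.2.symm⟩⟩
  loopless := ⟨fun p h => G.loopless.irrefl p.1 h.1⟩

open SimpleGraph

/-- A connected non-2-colorable graph has an odd closed walk. -/
lemma exists_odd_closed_walk {α : Type*} (G : SimpleGraph α)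
    (hGconn : G.Connected) (hGnb : ¬ G.Colorable 2) :
    ∃ (u : α) (p : G.Walk u u), Odd p.length := by
  by_contra h
  push_neg at h
  obtain ⟨v₀⟩ := hGconn.nonempty
  have reach : ∀ v, G.Walk v₀ v := fun v => (hGconn.preconnected v₀ v).some
  apply hGnb
  refine ⟨Coloring.mk (fun v => (⟨(reach v).length % 2, Nat.mod_lt _ (by norm_num)⟩ : Fin 2)) ?_⟩
  intro u v huv hc
  have hclosed := h v₀ (((reach u).concat huv).append (reach v).reverse)
  rw [Nat.not_odd_iff_even] at hclosed
  rw [Walk.length_append, Walk.length_concat, Walk.length_reverse] at hclosed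
  have : (reach u).length % 2 = (reach v).length % 2 := by
    simpa using congrArg Fin.val hc
  obtain ⟨k, hk⟩ := hclosed
  omega

/-- Walks of any parity between any two vertices, given an odd closed walk. -/
lemma exists_walk_parity {α : Type*} {G : SimpleGraph α}
    (hGconn : G.Connected) {u : α} (c : G.Walk u u) (hodd : Odd c.length)
    (a a' : α) (r : ℕ) : ∃ p : G.Walk a a', p.length % 2 = r % 2 := by
  have p₁ : G.Walk a u := (hGconn.preconnected a u).some
  have p₂ : G.Walk u a' := (hGconn.preconnected u a').some
  by_cases hpar : (p₁.append p₂).length % 2 = r % 2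
  · exact ⟨p₁.append p₂, hpar⟩
  · refine ⟨p₁.append (c.append p₂), ?_⟩
    rw [Walk.length_append, Walk.length_append]
    rw [Walk.length_append] at hpar
    obtain ⟨k, hk⟩ := hodd
    omega

/-- Pad a walk's length by 2 using a neighbor of the start. -/
lemma exists_walk_add_two {β : Type*} {H : SimpleGraph β} {b b' : β}
    (hHdeg : ∀ b : β, ∃ b' : β, H.Adj b b') (q : H.Walk b b') (k : ℕ) :
    ∃ q' : H.Walk b b', q'.length = q.length + 2 * k := by
  induction k with
  | zero => exact ⟨q, by omega⟩
  | succ n ih =>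
    obtain ⟨q', hq'⟩ := ih
    obtain ⟨c, hc⟩ := hHdeg b
    exact ⟨Walk.cons hc (Walk.cons hc.symm q'), by simp [hq']; omega⟩

/-- Equal-length walks in the factors give reachability in the tensor product. -/
lemma tensor_reachable_of_eq_length {α β : Type*} {G : SimpleGraph α} {H : SimpleGraph β} :
    ∀ (n : ℕ) {a a' : α} {b b' : β} (p : G.Walk a a') (q : H.Walk b b'),
      p.length = n → q.length = n → (tensorProd G H).Reachable (a, b) (a', b') := by
  intro n
  induction n with
  | zero =>
    intro a a' b b' p q hp hq
    have h1 := Walk.eq_of_length_eq_zero hp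
    have h2 := Walk.eq_of_length_eq_zero hq
    subst h1; subst h2
    exact Reachable.refl _
  | succ n ih =>
    intro a a' b b' p q hp hq
    cases p with
    | nil => simp at hp
    | cons hadj p' =>
      cases q with
      | nil => simp at hq
      | cons hadj' q' =>
        simp only [Walk.length_cons, Nat.succ_inj] at hp hq
        exact (Adj.reachable (G := tensorProd G H) ⟨hadj, hadj'⟩).trans (ih p' q' hp hq)

/-- If `X` is connected and non-bipartite and `Y` is connected (with every
vertex having a neighbor), then `X × Y` is connected. -/
theorem tensorProd_connected_of_nonbipartite
    {α β : Type*} (G : SimpleGraph α) (H : SimpleGraph β)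
    (hGconn : G.Connected) (hGnb : ¬ G.Colorable 2)
    (hHconn : H.Connected)
    (hGdeg : ∀ a : α, ∃ a' : α, G.Adj a a')
    (hHdeg : ∀ b : β, ∃ b' : β, H.Adj b b') :
    (tensorProd G H).Connected := by
  obtain ⟨u, c, hodd⟩ := exists_odd_closed_walk G hGconn hGnb
  rw [connected_iff]
  refine ⟨?_, ⟨(hGconn.nonempty.some, hHconn.nonempty.some)⟩⟩
  · rintro ⟨a, b⟩ ⟨a', b'⟩
    have q : H.Walk b b' := (hHconn.preconnected b b').some
    obtain ⟨p, hp⟩ := exists_walk_parity hGconn c hodd a a' q.length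
    rcases Nat.le_total p.length q.length with hle | hle
    · obtain ⟨k, hk⟩ : ∃ k, q.length = p.length + 2 * k :=
        ⟨(q.length - p.length) / 2, by omega⟩
      obtain ⟨p', hp'⟩ := exists_walk_add_two hGdeg p k
      exact tensor_reachable_of_eq_length q.length p' q (by omega) rfl
    · obtain ⟨k, hk⟩ : ∃ k, p.length = q.length + 2 * k :=
        ⟨(p.length - q.length) / 2, by omega⟩
      obtain ⟨q', hq'⟩ := exists_walk_add_two hHdeg q k
      exact tensor_reachable_of_eq_length p.length p q' rfl (by omega)
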